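/- In the two-dimensional case, the map s_{(a,z)}(a',z') = (2a−a', 2cosh(2(a−a'))z − z') is, for each fixed (a,z), an involution of ℝ², and satisfies s_p ∘ s_q ∘ s_p = s_{s_p(q)} for all p,q ∈ ℝ². -/
import Mathlib


noncomputable section

/-- The `ax+b`-type group law on `ℝ²`: `(a,z)·(a',z') = (a+a', e^{−2a'}z + z')`. -/
def mul2 (p q : ℝ × ℝ) : ℝ × ℝ := (p.1 + q.1, Real.exp (-2 * q.1) * p.2 + q.2)

/-- The inverse for `mul2`. -/
def inv2 (p : ℝ × ℝ) : ℝ × ℝ := (-p.1, -(Real.exp (2 * p.1) * p.2))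

/-- The two-dimensional geodesic symmetry `s_{(a,z)}(a',z') = (2a−a', 2cosh(2(a−a'))z − z')`. -/
def sym2 (p q : ℝ × ℝ) : ℝ × ℝ :=
  (2 * p.1 - q.1, 2 * Real.cosh (2 * (p.1 - q.1)) * p.2 - q.2)

/-- each `sym2 p` is an involution of `ℝ²`, and the symmetric-space
identity `s_p ∘ s_q ∘ s_p = s_{s_p(q)}` holds. -/
theorem sym2_involutive_and_identity :
    (∀ p q : ℝ × ℝ, sym2 p (sym2 p q) = q) ∧
    (∀ p q r : ℝ × ℝ, sym2 p (sym2 q (sym2 p r)) = sym2 (sym2 p q) r) := by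
  constructor
  · intro p q
    simp only [sym2, Prod.ext_iff, Real.cosh_eq]
    constructor <;> ring_nf
  · intro p q r
    simp only [sym2, Prod.ext_iff, Real.cosh_eq]
    refine ⟨by ring, ?_⟩
    field_simp
    ring_nf
    simp only [mul_assoc, ← Real.exp_add]
    ring_nf
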